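/- Berge's lemma (used for termination): a matching M in a graph G is maximum if and only if there is no M-augmenting path in G. -/

import Mathlib

open SimpleGraph

variable {V : Type*}

/-- `M` is a matching in the simple graph `G`: a set of edges of `G` that are
pairwise vertex-disjoint. -/
def IsMatchingSet (G : SimpleGraph V) (M : Set (Sym2 V)) : Prop :=
  M ⊆ G.edgeSet ∧ ∀ v : V, {e | e ∈ M ∧ v ∈ e}.Subsingleton

/-- A vertex is free (unmatched) if no matching edge contains it. -/
def Unmatched (M : Set (Sym2 V)) (v : V) : Prop :=
  ∀ e ∈ M, v ∉ e

/-- A walk is alternating w.r.t. `M` if its edges alternate non-matching /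
matching, starting with a non-matching edge. -/
def IsAlternating (G : SimpleGraph V) (M : Set (Sym2 V)) {u v : V} (p : G.Walk u v) : Prop :=
  ∀ (i : ℕ) (h : i < p.edges.length), (p.edges.get ⟨i, h⟩ ∈ M ↔ Odd i)

/-- An `M`-augmenting path: a simple path of odd length, alternating starting
(and hence ending) with non-matching edges, whose two endpoints are free. -/
def IsAugPath (G : SimpleGraph V) (M : Set (Sym2 V)) {u v : V} (p : G.Walk u v) : Prop :=
  p.IsPath ∧ Odd p.length ∧ IsAlternating G M p ∧ Unmatched M u ∧ Unmatched M v

/-- Length of a shortest even-length alternating simple path from a free vertex to `v`. -/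
noncomputable def Lcp (G : SimpleGraph V) (M : Set (Sym2 V)) (v : V) : ℕ∞ :=
  sInf {n : ℕ∞ | ∃ (f : V) (p : G.Walk f v), Unmatched M f ∧ p.IsPath ∧
    IsAlternating G M p ∧ Even p.length ∧ (p.length : ℕ∞) = n}

/-- Length of a shortest odd-length alternating simple path from a free vertex to `v`. -/
noncomputable def LcpOdd (G : SimpleGraph V) (M : Set (Sym2 V)) (v : V) : ℕ∞ :=
  sInf {n : ℕ∞ | ∃ (f : V) (p : G.Walk f v), Unmatched M f ∧ p.IsPath ∧
    IsAlternating G M p ∧ Odd p.length ∧ (p.length : ℕ∞) = n}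


section BergeAux
variable {G : SimpleGraph V}


def AltL (A B : Set (Sym2 V)) : List (Sym2 V) → Prop
  | [] => True
  | e :: l => e ∈ A ∧ AltL B A l

@[simp] lemma altL_nil {A B : Set (Sym2 V)} : AltL A B [] := trivial
@[simp] lemma altL_cons {A B : Set (Sym2 V)} {e : Sym2 V} {l : List (Sym2 V)} :
    AltL A B (e :: l) ↔ e ∈ A ∧ AltL B A l := Iff.rfl

lemma altL_get {A B : Set (Sym2 V)} : ∀ {l : List (Sym2 V)}, AltL A B l →
    ∀ (i : ℕ) (h : i < l.length), l.get ⟨i, h⟩ ∈ (if Odd i then B else A) := by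
  intro l
  induction l generalizing A B with
  | nil => intro _ i h; simp at h
  | cons e l ih =>
    rintro ⟨he, hl⟩ i h
    match i with
    | 0 => simpa using he
    | (i+1) =>
      have H := ih hl i (by simpa using Nat.lt_of_succ_lt_succ h)
      simp only [List.get_cons_succ]
      rcases Nat.even_or_odd i with hp | hp
      · rw [if_neg (Nat.not_odd_iff_even.2 hp)] at H
        rwa [if_pos (by simpa [Nat.odd_add_one, Nat.not_odd_iff_even] using hp)]
      · rw [if_pos hp] at H
        rwa [if_neg (by simpa [Nat.odd_add_one, Nat.not_even_iff_odd] using hp)]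

lemma get_altL {A B : Set (Sym2 V)} : ∀ {l : List (Sym2 V)},
    (∀ (i : ℕ) (h : i < l.length), l.get ⟨i, h⟩ ∈ (if Odd i then B else A)) → AltL A B l := by
  intro l
  induction l generalizing A B with
  | nil => intro _; trivial
  | cons e l ih =>
    intro H
    refine ⟨by simpa using H 0 (by simp), ih fun i h => ?_⟩
    have := H (i+1) (by simpa using Nat.succ_lt_succ h)
    simp only [List.get_cons_succ] at this
    rcases Nat.even_or_odd i with hp | hp
    · rw [if_pos (by simpa [Nat.odd_add_one, Nat.not_odd_iff_even] using hp)] at this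
      rwa [if_neg (Nat.not_odd_iff_even.2 hp)]
    · rw [if_neg (by simpa [Nat.odd_add_one, Nat.not_even_iff_odd] using hp)] at this
      rwa [if_pos hp]

lemma altL_concat {A B : Set (Sym2 V)} : ∀ {l : List (Sym2 V)}, AltL A B l →
    ∀ {e : Sym2 V}, e ∈ (if Odd l.length then B else A) → AltL A B (l ++ [e]) := by
  intro l
  induction l generalizing A B with
  | nil => intro _ e he; simp at he ⊢; exact he
  | cons f l ih =>
    rintro ⟨hf, hl⟩ e he
    refine ⟨hf, ih hl ?_⟩
    rcases Nat.even_or_odd l.length with hp | hp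
    · rw [if_pos (by simp [Nat.odd_add_one, Nat.not_odd_iff_even, hp])] at he
      rwa [if_neg (Nat.not_odd_iff_even.2 hp)]
    · rw [if_neg (by simp [Nat.odd_add_one, Nat.not_even_iff_odd, hp])] at he
      rwa [if_pos hp]

lemma altL_countP {A B : Set (Sym2 V)} {q : Sym2 V → Bool} :
    ∀ {l : List (Sym2 V)}, (∀ x ∈ A, q x = true) → (∀ x ∈ B, q x = false) →
      AltL A B l → l.countP q = (l.length + 1) / 2 := by
  intro l
  induction l generalizing A B q with
  | nil => simp
  | cons e l ih =>
    rintro hA hB ⟨he, hl⟩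
    have h1 : l.countP (fun x => !q x) = (l.length + 1) / 2 :=
      ih (fun x hx => by simp [hB x hx]) (fun x hx => by simp [hA x hx]) hl
    have h2 : l.countP q + l.countP (fun x => !q x) = l.length := by
      have hq : (fun x : Sym2 V => !q x) = (fun a => decide (¬ q a = true)) := by
        funext x; cases q x <;> simp
      rw [hq, ← List.length_eq_countP_add_countP (p := q)]
    have h3 : l.countP q = l.length / 2 := by omega
    rw [List.countP_cons_of_pos (hA e he), h3]
    simp only [List.length_cons]
    omega


lemma edges_get_eq : ∀ {u v : V} (p : G.Walk u v) (i : ℕ) (h : i < p.edges.length),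
    p.edges.get ⟨i, h⟩ = s(p.getVert i, p.getVert (i+1)) := by
  intro u v p
  induction p with
  | nil => intro i h; simp at h
  | cons ha q ih =>
    intro i h
    match i with
    | 0 => simp [Walk.getVert_zero, Walk.getVert_cons_succ]
    | (i+1) =>
      simp only [Walk.edges_cons, List.get_cons_succ, Walk.getVert_cons_succ]
      exact ih i (by simpa using Nat.lt_of_succ_lt_succ (by simpa using h))

lemma support_get_eq : ∀ {u v : V} (p : G.Walk u v) (i : ℕ) (h : i < p.support.length),
    p.support.get ⟨i, h⟩ = p.getVert i := by
  intro u v p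
  induction p with
  | nil => intro i h; simp at h; simp [h]
  | cons ha q ih =>
    intro i h
    match i with
    | 0 => simp
    | (i+1) =>
      simp only [Walk.support_cons, List.get_cons_succ, Walk.getVert_cons_succ]
      exact ih i (by simp at h ⊢; omega)

lemma getVert_injOn' {u v : V} {p : G.Walk u v} (hp : p.IsPath) {i j : ℕ}
    (hi : i ≤ p.length) (hj : j ≤ p.length) (h : p.getVert i = p.getVert j) : i = j := by
  have hi' : i < p.support.length := by rw [Walk.length_support]; omega
  have hj' : j < p.support.length := by rw [Walk.length_support]; omega
  have := (List.Nodup.get_inj_iff hp.support_nodup (i := ⟨i, hi'⟩) (j := ⟨j, hj'⟩)).1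
  simpa using this (by rw [support_get_eq, support_get_eq]; exact h)

lemma mem_edges_iff_get {u v : V} {p : G.Walk u v} {e : Sym2 V} :
    e ∈ p.edges ↔ ∃ (j : ℕ) (h : j < p.length), s(p.getVert j, p.getVert (j+1)) = e := by
  rw [List.mem_iff_get]
  constructor
  · rintro ⟨⟨j, hj⟩, rfl⟩
    exact ⟨j, by simpa using hj, (edges_get_eq p j hj).symm⟩
  · rintro ⟨j, hj, h⟩
    exact ⟨⟨j, by simpa using hj⟩, by rw [edges_get_eq p j (by simpa using hj)]; exact h⟩

lemma isPath_concat {u v w : V} {p : G.Walk u v} (hp : p.IsPath) (h : G.Adj v w)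
    (hw : w ∉ p.support) : (p.concat h).IsPath := by
  rw [Walk.isPath_def, Walk.support_concat, List.nodup_append]
  exact ⟨hp.support_nodup, List.nodup_singleton w, by
    intro a ha b hb; simp only [List.mem_singleton] at hb; subst hb; exact fun h => hw (h ▸ ha)⟩

lemma vertex_has_A_edge {A B : Set (Sym2 V)} {u w : V} {p : G.Walk u w}
    (halt : AltL A B p.edges) {j : ℕ} (hj : j < p.length) :
    ∃ f ∈ p.edges, f ∈ A ∧ p.getVert j ∈ f := by
  rcases Nat.even_or_odd j with hj2 | hj2
  · have hlt : j < p.edges.length := by rw [Walk.length_edges]; exact hj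
    refine ⟨p.edges.get ⟨j, hlt⟩, List.get_mem _ _, ?_, ?_⟩
    · have := altL_get halt j hlt
      rwa [if_neg (Nat.not_odd_iff_even.2 hj2)] at this
    · rw [edges_get_eq]; simp [Sym2.mem_iff]
  · have hj0 : j ≠ 0 := by rintro rfl; simp [Nat.odd_iff] at hj2
    have hlt : j - 1 < p.edges.length := by rw [Walk.length_edges]; omega
    refine ⟨p.edges.get ⟨j - 1, hlt⟩, List.get_mem _ _, ?_, ?_⟩
    · have := altL_get halt (j-1) hlt
      rw [if_neg] at this
      · exact this
      · rw [Nat.odd_iff] at hj2 ⊢; omega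
    · rw [edges_get_eq, show j - 1 + 1 = j from by omega]; simp [Sym2.mem_iff]

lemma vertex_has_B_edge {A B : Set (Sym2 V)} {u w : V} {p : G.Walk u w}
    (halt : AltL A B p.edges) {j : ℕ} (hj1 : 1 ≤ j) (hj : j < p.length) :
    ∃ f ∈ p.edges, f ∈ B ∧ p.getVert j ∈ f := by
  rcases Nat.even_or_odd j with hj2 | hj2
  · have hlt : j - 1 < p.edges.length := by rw [Walk.length_edges]; omega
    refine ⟨p.edges.get ⟨j - 1, hlt⟩, List.get_mem _ _, ?_, ?_⟩
    · have := altL_get halt (j-1) hlt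
      rw [if_pos] at this
      · exact this
      · rw [Nat.even_iff] at hj2; rw [Nat.odd_iff]; omega
    · rw [edges_get_eq, show j - 1 + 1 = j from by omega]; simp [Sym2.mem_iff]
  · have hlt : j < p.edges.length := by rw [Walk.length_edges]; exact hj
    refine ⟨p.edges.get ⟨j, hlt⟩, List.get_mem _ _, ?_, ?_⟩
    · have := altL_get halt j hlt
      rwa [if_pos hj2] at this
    · rw [edges_get_eq]; simp [Sym2.mem_iff]

lemma endpoint_edge {u w : V} {p : G.Walk u w} (hp : p.IsPath) {e : Sym2 V}
    (he : e ∈ p.edges) (hwe : w ∈ e) :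
    ∃ h : p.length - 1 < p.edges.length, e = p.edges.get ⟨p.length - 1, h⟩ ∧ 1 ≤ p.length := by
  obtain ⟨j, hj, hrep⟩ := mem_edges_iff_get.1 he
  have hi : w = p.getVert j ∨ w = p.getVert (j+1) := by
    rw [← hrep] at hwe; simpa [Sym2.mem_iff, eq_comm] using hwe
  have hw : p.getVert p.length = w := Walk.getVert_length p
  have hj' : j + 1 = p.length := by
    rcases hi with hi | hi
    · exact absurd (getVert_injOn' hp (le_refl _) (le_of_lt hj) (hw.trans hi)) (by omega)
    · have := getVert_injOn' hp (le_refl _) (by omega : j + 1 ≤ p.length) (hw.trans hi)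
      omega
  refine ⟨by rw [Walk.length_edges]; omega, ?_, by omega⟩
  rw [edges_get_eq, show p.length - 1 = j from by omega]
  exact hrep.symm

lemma start_edge {u w : V} {p : G.Walk u w} (hp : p.IsPath) {e : Sym2 V}
    (he : e ∈ p.edges) (hue : u ∈ e) :
    ∃ h : 0 < p.edges.length, e = p.edges.get ⟨0, h⟩ := by
  obtain ⟨j, hj, hrep⟩ := mem_edges_iff_get.1 he
  have hi : u = p.getVert j ∨ u = p.getVert (j+1) := by
    rw [← hrep] at hue; simpa [Sym2.mem_iff, eq_comm] using hue
  have hu : p.getVert 0 = u := Walk.getVert_zero p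
  have hj' : j = 0 := by
    rcases hi with hi | hi
    · have := getVert_injOn' hp (Nat.zero_le _) (le_of_lt hj) (hu.trans hi)
      omega
    · have := getVert_injOn' hp (by omega : j + 1 ≤ p.length) (Nat.zero_le _) (hi.symm.trans hu.symm)
      omega
  refine ⟨by rw [Walk.length_edges]; omega, ?_⟩
  rw [edges_get_eq]
  subst hj'
  exact hrep.symm

open Classical in
lemma cover_card [Fintype V] (K : Finset (Sym2 V)) (hK : IsMatchingSet G ↑K) :
    (Finset.univ.filter (fun x : V => ∃ e ∈ K, x ∈ e)).card = 2 * K.card := by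
  classical
  have : (Finset.univ.filter (fun x : V => ∃ e ∈ K, x ∈ e)) =
      K.biUnion (fun e => Finset.univ.filter (· ∈ e)) := by
    ext x; simp
  have hdisj : ∀ e1 ∈ K, ∀ e2 ∈ K, e1 ≠ e2 →
      Disjoint (Finset.univ.filter (· ∈ e1)) (Finset.univ.filter (· ∈ e2)) := by
    intro e1 h1 e2 h2 hne
    simp only [Finset.disjoint_left, Finset.mem_filter]
    rintro x ⟨-, hx1⟩ ⟨-, hx2⟩
    exact hne (hK.2 x ⟨by simpa using h1, hx1⟩ ⟨by simpa using h2, hx2⟩)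
  have hcard2 : ∀ e ∈ K, (Finset.univ.filter (· ∈ e)).card = 2 := by
    intro e he
    have hEdge : e ∈ G.edgeSet := hK.1 (by simpa using he)
    induction e with
    | _ a b =>
      have hab : a ≠ b := by
        intro h; subst h; rw [SimpleGraph.mem_edgeSet] at hEdge; exact G.irrefl hEdge
      have h2 : Finset.univ.filter (· ∈ s(a,b)) = {a, b} := by
        ext x; simp [Sym2.mem_iff]
      rw [h2, Finset.card_insert_of_notMem (by simpa using hab), Finset.card_singleton]
  rw [this, Finset.card_biUnion hdisj, Finset.sum_congr rfl hcard2, Finset.sum_const,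
    smul_eq_mul, mul_comm]

lemma exists_unmatched [Fintype V] {M N : Finset (Sym2 V)} (hM : IsMatchingSet G ↑M)
    (hN : IsMatchingSet G ↑N) (h : M.card < N.card) :
    ∃ v : V, Unmatched (↑M) v ∧ ∃ e ∈ N, v ∈ e := by
  classical
  by_contra hcon
  push_neg at hcon
  have hsub : (Finset.univ.filter (fun x : V => ∃ e ∈ N, x ∈ e)) ⊆
      (Finset.univ.filter (fun x : V => ∃ e ∈ M, x ∈ e)) := by
    intro x hx
    simp only [Finset.mem_filter, Finset.mem_univ, true_and] at hx ⊢
    obtain ⟨e, he, hxe⟩ := hx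
    by_contra hxm
    push_neg at hxm
    exact hcon x (fun f hf => by simpa using fun hxf => hxm f (by simpa using hf) hxf) e he hxe
  have := Finset.card_le_card hsub
  rw [cover_card N hN, cover_card M hM] at this
  omega

lemma altL_countP' {A B : Set (Sym2 V)} {q : Sym2 V → Bool} {l : List (Sym2 V)}
    (hA : ∀ x ∈ A, q x = false) (hB : ∀ x ∈ B, q x = true)
    (h : AltL A B l) : l.countP q = l.length / 2 := by
  have h1 : l.countP (fun x => !q x) = (l.length + 1) / 2 :=
    altL_countP (fun x hx => by simp [hA x hx]) (fun x hx => by simp [hB x hx]) h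
  have h2 : l.countP q + l.countP (fun x => !q x) = l.length := by
    have hq : (fun x : Sym2 V => !q x) = (fun a => decide (¬ q a = true)) := by
      funext x; cases q x <;> simp
    rw [hq, ← List.length_eq_countP_add_countP (p := q)]
  omega

lemma isAlternating_altL {M : Set (Sym2 V)} {u w : V} {p : G.Walk u w}
    (h : IsAlternating G M p) : AltL Mᶜ M p.edges := by
  apply get_altL
  intro i hlt
  by_cases hi : Odd i
  · rw [if_pos hi]; exact (h i hlt).2 hi
  · rw [if_neg hi]; exact fun hm => hi ((h i hlt).1 hm)

lemma altL_isAlternating {M : Set (Sym2 V)} {A B : Set (Sym2 V)} {u w : V} {p : G.Walk u w}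
    (hA : A ⊆ Mᶜ) (hB : B ⊆ M) (h : AltL A B p.edges) : IsAlternating G M p := by
  intro i hlt
  have := altL_get h i hlt
  by_cases hi : Odd i
  · rw [if_pos hi] at this; exact ⟨fun _ => hi, fun _ => hB this⟩
  · rw [if_neg hi] at this
    exact ⟨fun hm => absurd hm (hA this), fun ho => absurd ho hi⟩

lemma matching_succ_of_aug (G : SimpleGraph V) (M : Finset (Sym2 V))
    (hM : IsMatchingSet G ↑M) {u w : V} {p : G.Walk u w} (haug : IsAugPath G ↑M p) :
    ∃ N : Finset (Sym2 V), IsMatchingSet G ↑N ∧ N.card = M.card + 1 := by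
  classical
  obtain ⟨hp, hodd, haltM, huu, huw⟩ := haug
  have halt : AltL (↑M : Set (Sym2 V))ᶜ (↑M) p.edges := isAlternating_altL haltM
  have hnodup : p.edges.Nodup := hp.isTrail.edges_nodup
  set E : Finset (Sym2 V) := p.edges.toFinset with hE
  set N : Finset (Sym2 V) := (M \ E) ∪ (E \ M) with hNdef
  have hmemN : ∀ e : Sym2 V, e ∈ N ↔ (e ∈ M ∧ e ∉ E) ∨ (e ∈ E ∧ e ∉ M) := by
    intro e; simp [hNdef, Finset.mem_union, Finset.mem_sdiff]
  have hmemE : ∀ e : Sym2 V, e ∈ E ↔ e ∈ p.edges := fun e => List.mem_toFinset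
  -- mixed impossibility
  have hmixed : ∀ (x : V) (e1 e2 : Sym2 V), e1 ∈ M → e1 ∉ E → e2 ∈ E → e2 ∉ M →
      x ∈ e1 → x ∈ e2 → False := by
    intro x e1 e2 h1M h1E h2E h2M hx1 hx2
    obtain ⟨j, hj, hrep⟩ := mem_edges_iff_get.1 ((hmemE e2).1 h2E)
    have hxi : x = p.getVert j ∨ x = p.getVert (j+1) := by
      rw [← hrep] at hx2; simpa [Sym2.mem_iff, eq_comm] using hx2
    have : ∃ i : ℕ, i ≤ p.length ∧ x = p.getVert i := by
      rcases hxi with hxi | hxi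
      · exact ⟨j, by omega, hxi⟩
      · exact ⟨j+1, by omega, hxi⟩
    obtain ⟨i, hile, hxg⟩ := this
    by_cases hi0 : i = 0
    · subst hi0
      rw [Walk.getVert_zero] at hxg
      exact huu e1 (by simpa using h1M) (hxg ▸ hx1)
    · by_cases hil : i = p.length
      · subst hil
        rw [Walk.getVert_length] at hxg
        exact huw e1 (by simpa using h1M) (hxg ▸ hx1)
      · obtain ⟨f, hfe, hfB, hxf⟩ :=
          vertex_has_B_edge halt (by omega : 1 ≤ i) (by omega : i < p.length)
        have hfne : f ≠ e1 := fun h => h1E (h ▸ (hmemE f).2 hfe)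
        exact hfne (hM.2 x ⟨hfB, hxg ▸ hxf⟩ ⟨by simpa using h1M, hx1⟩)
  refine ⟨N, ⟨?_, ?_⟩, ?_⟩
  · -- N ⊆ edgeSet
    intro e he
    rw [Finset.mem_coe, hmemN] at he
    rcases he with ⟨h1, -⟩ | ⟨h1, -⟩
    · exact hM.1 (by simpa using h1)
    · exact Walk.edges_subset_edgeSet p ((hmemE e).1 h1)
  · -- matching
    intro x e1 he1 e2 he2
    obtain ⟨he1N, hx1⟩ := he1
    obtain ⟨he2N, hx2⟩ := he2
    rw [Finset.mem_coe, hmemN] at he1N he2N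
    rcases he1N with ⟨h1M, h1E⟩ | ⟨h1E, h1M⟩ <;> rcases he2N with ⟨h2M, h2E⟩ | ⟨h2E, h2M⟩
    · exact hM.2 x ⟨by simpa using h1M, hx1⟩ ⟨by simpa using h2M, hx2⟩
    · exact absurd (hmixed x e1 e2 h1M h1E h2E h2M hx1 hx2) (not_false)
    · exact absurd (hmixed x e2 e1 h2M h2E h1E h1M hx2 hx1) (not_false)
    · -- both on path, both not in M : indices both even
      obtain ⟨j1, hj1, hrep1⟩ := mem_edges_iff_get.1 ((hmemE e1).1 h1E)
      obtain ⟨j2, hj2, hrep2⟩ := mem_edges_iff_get.1 ((hmemE e2).1 h2E)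
      have hlt1 : j1 < p.edges.length := by rw [Walk.length_edges]; exact hj1
      have hlt2 : j2 < p.edges.length := by rw [Walk.length_edges]; exact hj2
      have hev1 : ¬ Odd j1 := by
        intro ho
        have := altL_get halt j1 hlt1
        rw [if_pos ho, edges_get_eq, hrep1] at this
        exact h1M (by simpa using this)
      have hev2 : ¬ Odd j2 := by
        intro ho
        have := altL_get halt j2 hlt2
        rw [if_pos ho, edges_get_eq, hrep2] at this
        exact h2M (by simpa using this)
      have hxi1 : x = p.getVert j1 ∨ x = p.getVert (j1+1) := by
        rw [← hrep1] at hx1; simpa [Sym2.mem_iff, eq_comm] using hx1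
      have hxi2 : x = p.getVert j2 ∨ x = p.getVert (j2+1) := by
        rw [← hrep2] at hx2; simpa [Sym2.mem_iff, eq_comm] using hx2
      have hj12 : j1 = j2 := by
        rw [Nat.not_odd_iff_even, Nat.even_iff] at hev1 hev2
        rcases hxi1 with hxa | hxa <;> rcases hxi2 with hxb | hxb <;>
          [ (have := getVert_injOn' hp (by omega : j1 ≤ p.length) (by omega : j2 ≤ p.length)
              (hxa.symm.trans hxb));
            (have := getVert_injOn' hp (by omega : j1 ≤ p.length) (by omega : j2+1 ≤ p.length)
              (hxa.symm.trans hxb));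
            (have := getVert_injOn' hp (by omega : j1+1 ≤ p.length) (by omega : j2 ≤ p.length)
              (hxa.symm.trans hxb));
            (have := getVert_injOn' hp (by omega : j1+1 ≤ p.length) (by omega : j2+1 ≤ p.length)
              (hxa.symm.trans hxb))] <;> omega
      rw [← hrep1, ← hrep2, hj12]
  · -- cardinality
    have hElen : E.card = p.length := by
      rw [hE, List.toFinset_card_of_nodup hnodup, Walk.length_edges]
    have hq : p.edges.countP (fun e => decide (e ∈ M)) = p.length / 2 := by
      have := altL_countP' (q := fun e => decide (e ∈ M))
        (fun x hx => by simpa using hx) (fun x hx => by simpa using hx) halt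
      rwa [Walk.length_edges] at this
    have hEsdiff : (E \ M).card = p.length - p.length / 2 := by
      have hfil : E \ M = (p.edges.filter (fun e => !decide (e ∈ M))).toFinset := by
        ext e
        simp [hE, List.mem_filter, Finset.mem_sdiff, List.mem_toFinset]
      rw [hfil, List.toFinset_card_of_nodup (hnodup.filter _), ← List.countP_eq_length_filter]
      have h2 : p.edges.countP (fun e => decide (e ∈ M)) +
          p.edges.countP (fun x => !decide (x ∈ M)) = p.edges.length := by
        have hq2 : (fun x : Sym2 V => !decide (x ∈ M)) =
            (fun a => decide (¬ (decide (a ∈ M)) = true)) := by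
          funext x; by_cases h : x ∈ M <;> simp [h]
        rw [hq2, ← List.length_eq_countP_add_countP (p := fun e => decide (e ∈ M))]
      rw [Walk.length_edges] at h2
      omega
    have hEinter : (M ∩ E).card = p.length / 2 := by
      have h3 : (E ∩ M).card + (E \ M).card = E.card := Finset.card_inter_add_card_sdiff E M
      rw [Finset.inter_comm] at h3
      omega
    have hMsum : (M ∩ E).card + (M \ E).card = M.card := Finset.card_inter_add_card_sdiff M E
    have hdisj : Disjoint (M \ E) (E \ M) := by
      simp only [Finset.disjoint_left, Finset.mem_sdiff]
      rintro e ⟨-, he⟩ ⟨he2, -⟩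
      exact he he2
    rw [hNdef, Finset.card_union_of_disjoint hdisj]
    obtain ⟨k, hk⟩ := hodd
    omega

lemma berge_key [Fintype V] [DecidableEq (Sym2 V)] (G : SimpleGraph V) (M : Finset (Sym2 V))
    (hM : IsMatchingSet G ↑M) :
    ∀ (n : ℕ) (N : Finset (Sym2 V)), ((M \ N) ∪ (N \ M)).card = n →
      IsMatchingSet G ↑N → M.card < N.card →
      ∃ (u w : V) (p : G.Walk u w), IsAugPath G ↑M p := by
  classical
  intro n
  induction n using Nat.strong_induction_on with
  | _ n ih =>
  intro N hDcard hN hcard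
  obtain ⟨v, hvM, ev, hevN, hvev⟩ := exists_unmatched hM hN hcard
  set A : Set (Sym2 V) := ↑N \ ↑M with hA
  set B : Set (Sym2 V) := ↑M \ ↑N with hB
  set L : Set ℕ :=
    {m | ∃ (w : V) (p : G.Walk v w), p.IsPath ∧ AltL A B p.edges ∧ p.length = m} with hL
  have hL0 : (0 : ℕ) ∈ L := ⟨v, Walk.nil, by simp, by simp, rfl⟩
  have hbdd : BddAbove L := by
    refine ⟨Fintype.card V, ?_⟩
    rintro m ⟨w, p, hp, -, rfl⟩
    exact hp.length_lt.le
  obtain ⟨w, p, hp, halt, hlen⟩ := Nat.sSup_mem ⟨0, hL0⟩ hbdd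
  -- maximality: no extension possible
  have hmax : ∀ (z : V) (hadj : G.Adj w z), z ∉ p.support →
      s(w, z) ∈ (if Odd p.length then B else A) → False := by
    intro z hadj hz he
    have hmem : (p.concat hadj).length ∈ L := by
      refine ⟨z, p.concat hadj, isPath_concat hp hadj hz, ?_, rfl⟩
      rw [Walk.edges_concat, List.concat_eq_append]
      apply altL_concat halt
      rwa [Walk.length_edges]
    have := le_csSup hbdd hmem
    rw [Walk.length_concat] at this
    omega
  -- generic facts
  have hedge_inA_or_B : ∀ e ∈ p.edges, e ∈ A ∨ e ∈ B := by
    intro e he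
    obtain ⟨j, hj, hrep⟩ := mem_edges_iff_get.1 he
    have hlt : j < p.edges.length := by rw [Walk.length_edges]; exact hj
    have := altL_get halt j hlt
    rw [edges_get_eq, hrep] at this
    by_cases hjo : Odd j
    · rw [if_pos hjo] at this; exact Or.inr this
    · rw [if_neg hjo] at this; exact Or.inl this
  -- the case p.length = 0 is impossible
  have hlen0 : p.length ≠ 0 := by
    intro h0
    have hvw : v = w := by
      have := Walk.getVert_length p
      rw [h0, Walk.getVert_zero] at this
      exact this
    subst hvw
    have hevA : ev ∈ A := by
      refine ⟨by simpa using hevN, fun hm => hvM ev hm hvev⟩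
    set z := Sym2.Mem.other hvev with hzdef
    have hspec : s(v, z) = ev := Sym2.other_spec hvev
    have hadj : G.Adj v z := by
      rw [← SimpleGraph.mem_edgeSet, hspec]
      exact hN.1 (by simpa using hevN)
    have hzs : z ∉ p.support := by
      intro hzsup
      obtain ⟨i, hgi, hile⟩ := Walk.mem_support_iff_exists_getVert.1 hzsup
      rw [h0] at hile
      interval_cases i
      rw [Walk.getVert_zero] at hgi
      exact hadj.ne hgi
    exact hmax z hadj hzs (by rw [if_neg (by simp [h0] : ¬ Odd p.length), hspec]; exact hevA)
  -- last edge of p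
  have hlast : ∀ (hl : p.length - 1 < p.edges.length),
      p.edges.get ⟨p.length - 1, hl⟩ ∈ p.edges ∧
      w ∈ p.edges.get ⟨p.length - 1, hl⟩ := by
    intro hl
    refine ⟨List.get_mem _ _, ?_⟩
    rw [edges_get_eq, show p.length - 1 + 1 = p.length from by omega, Walk.getVert_length]
    simp [Sym2.mem_iff]
  have hllt : p.length - 1 < p.edges.length := by rw [Walk.length_edges]; omega
  rcases Nat.even_or_odd p.length with heven | hodd
  · -- even case: recurse with swapped matching
    -- w is N-free
    have hlastB : p.edges.get ⟨p.length - 1, hllt⟩ ∈ B := by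
      have := altL_get halt (p.length - 1) hllt
      rwa [if_pos (by rw [Nat.even_iff] at heven; rw [Nat.odd_iff]; omega)] at this
    have hwN : ∀ e ∈ (↑N : Set (Sym2 V)), w ∉ e := by
      intro e heN hwe
      by_cases hein : e ∈ p.edges
      · obtain ⟨hl, hrep, -⟩ := endpoint_edge hp hein hwe
        rw [hrep] at heN
        exact hlastB.2 heN
      · by_cases heM : e ∈ (↑M : Set (Sym2 V))
        · -- two M edges at w
          have := hM.2 w ⟨heM, hwe⟩ ⟨hlastB.1, (hlast hllt).2⟩
          exact hein (this ▸ (hlast hllt).1)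
        · -- e ∈ A, extension contradiction
          have heA : e ∈ A := ⟨heN, heM⟩
          set z := Sym2.Mem.other hwe with hzdef
          have hspec : s(w, z) = e := Sym2.other_spec hwe
          have hadj : G.Adj w z := by
            rw [← SimpleGraph.mem_edgeSet, hspec]
            exact hN.1 heN
          have hzs : z ∉ p.support := by
            intro hzsup
            obtain ⟨i, hgi, hile⟩ := Walk.mem_support_iff_exists_getVert.1 hzsup
            have hzev : z ∈ e := hspec ▸ Sym2.mem_mk_right w z
            by_cases hi0 : i = 0
            · -- z = v : two N-edges at v
              subst hi0
              rw [Walk.getVert_zero] at hgi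
              have h0lt : 0 < p.edges.length := by rw [Walk.length_edges]; omega
              have hfirstA : p.edges.get ⟨0, h0lt⟩ ∈ A := by
                have := altL_get halt 0 h0lt
                rwa [if_neg (by simp)] at this
              have hvfirst : v ∈ p.edges.get ⟨0, h0lt⟩ := by
                rw [edges_get_eq, Walk.getVert_zero]; simp [Sym2.mem_iff]
              have := hN.2 v ⟨by simpa using hfirstA.1, hvfirst⟩
                ⟨heN, hgi ▸ hzev⟩
              exact hein (this.symm ▸ List.get_mem _ _)
            · by_cases hil : i = p.length
              · subst hil
                rw [Walk.getVert_length] at hgi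
                exact hadj.ne' hgi.symm
              · obtain ⟨f, hfe, hfA, hzf⟩ :=
                  vertex_has_A_edge halt (by omega : i < p.length)
                have hfne : f ≠ e := fun h => hein (h ▸ hfe)
                exact hfne (hN.2 (p.getVert i) ⟨by simpa using hfA.1, hzf⟩
                  ⟨heN, hgi ▸ hzev⟩)
          exact hmax z hadj hzs
            (by rw [if_neg (by rwa [Nat.not_odd_iff_even]), hspec]; exact heA)
    -- build the swapped matching N'
    set E : Finset (Sym2 V) := p.edges.toFinset with hE
    have hmemE : ∀ e : Sym2 V, e ∈ E ↔ e ∈ p.edges := fun e => List.mem_toFinset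
    set N' : Finset (Sym2 V) := (N \ E) ∪ (E \ N) with hN'def
    have hmemN' : ∀ e : Sym2 V, e ∈ N' ↔ (e ∈ N ∧ e ∉ E) ∨ (e ∈ E ∧ e ∉ N) := by
      intro e; simp [hN'def, Finset.mem_union, Finset.mem_sdiff]
    have hnodup : p.edges.Nodup := hp.isTrail.edges_nodup
    have hEinA : ∀ e ∈ E, e ∈ N → e ∉ M := by
      intro e heE heN heM
      rcases hedge_inA_or_B e ((hmemE e).1 heE) with h | h
      · exact h.2 (by simpa using heM)
      · exact h.2 (by simpa using heN)
    have hEinB : ∀ e ∈ E, e ∉ N → e ∈ M := by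
      intro e heE heN
      rcases hedge_inA_or_B e ((hmemE e).1 heE) with h | h
      · exact absurd (by simpa using h.1) heN
      · simpa using h.1
    -- mixed impossibility for N'
    have hmixed : ∀ (x : V) (e1 e2 : Sym2 V), e1 ∈ N → e1 ∉ E → e2 ∈ E → e2 ∉ N →
        x ∈ e1 → x ∈ e2 → False := by
      intro x e1 e2 h1N h1E h2E h2N hx1 hx2
      obtain ⟨j, hj, hrep⟩ := mem_edges_iff_get.1 ((hmemE e2).1 h2E)
      have hxi : x = p.getVert j ∨ x = p.getVert (j+1) := by
        rw [← hrep] at hx2; simpa [Sym2.mem_iff, eq_comm] using hx2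
      have hex : ∃ i : ℕ, i ≤ p.length ∧ x = p.getVert i := by
        rcases hxi with hxi | hxi
        · exact ⟨j, by omega, hxi⟩
        · exact ⟨j+1, by omega, hxi⟩
      obtain ⟨i, hile, hxg⟩ := hex
      by_cases hi0 : i = 0
      · subst hi0
        rw [Walk.getVert_zero] at hxg
        have h0lt : 0 < p.edges.length := by rw [Walk.length_edges]; omega
        have hfirstA : p.edges.get ⟨0, h0lt⟩ ∈ A := by
          have := altL_get halt 0 h0lt
          rwa [if_neg (by simp)] at this
        have hvfirst : v ∈ p.edges.get ⟨0, h0lt⟩ := by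
          rw [edges_get_eq, Walk.getVert_zero]; simp [Sym2.mem_iff]
        have := hN.2 v ⟨by simpa using hfirstA.1, hvfirst⟩ ⟨by simpa using h1N, hxg ▸ hx1⟩
        exact h1E (this.symm ▸ (hmemE _).2 (List.get_mem _ _))
      · by_cases hil : i = p.length
        · subst hil
          rw [Walk.getVert_length] at hxg
          exact hwN e1 (by simpa using h1N) (hxg ▸ hx1)
        · obtain ⟨f, hfe, hfA, hxf⟩ := vertex_has_A_edge halt (by omega : i < p.length)
          have hfne : f ≠ e1 := fun h => h1E (h ▸ (hmemE f).2 hfe)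
          exact hfne (hN.2 x ⟨by simpa using hfA.1, hxg ▸ hxf⟩ ⟨by simpa using h1N, hx1⟩)
    have hN'match : IsMatchingSet G ↑N' := by
      constructor
      · intro e he
        rw [Finset.mem_coe, hmemN'] at he
        rcases he with ⟨h1, -⟩ | ⟨h1, -⟩
        · exact hN.1 (by simpa using h1)
        · exact Walk.edges_subset_edgeSet p ((hmemE e).1 h1)
      · intro x e1 he1 e2 he2
        obtain ⟨he1N, hx1⟩ := he1
        obtain ⟨he2N, hx2⟩ := he2
        rw [Finset.mem_coe, hmemN'] at he1N he2N
        rcases he1N with ⟨h1N, h1E⟩ | ⟨h1E, h1N⟩ <;> rcases he2N with ⟨h2N, h2E⟩ | ⟨h2E, h2N⟩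
        · exact hN.2 x ⟨by simpa using h1N, hx1⟩ ⟨by simpa using h2N, hx2⟩
        · exact absurd (hmixed x e1 e2 h1N h1E h2E h2N hx1 hx2) not_false
        · exact absurd (hmixed x e2 e1 h2N h2E h1E h1N hx2 hx1) not_false
        · exact hM.2 x ⟨by simpa using hEinB e1 h1E h1N, hx1⟩
            ⟨by simpa using hEinB e2 h2E h2N, hx2⟩
    -- cardinalities
    have hElen : E.card = p.length := by
      rw [hE, List.toFinset_card_of_nodup hnodup, Walk.length_edges]
    have hq : p.edges.countP (fun e => decide (e ∈ N)) = (p.length + 1) / 2 := by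
      have := altL_countP (A := A) (B := B) (q := fun e => decide (e ∈ N))
        (fun x hx => by simpa using hx.1) (fun x hx => by simpa using hx.2) halt
      rwa [Walk.length_edges] at this
    have hEinter : (N ∩ E).card = (p.length + 1) / 2 := by
      have hfil : N ∩ E = (p.edges.filter (fun e => decide (e ∈ N))).toFinset := by
        ext e
        simp [hE, List.mem_filter, Finset.mem_inter, List.mem_toFinset, and_comm]
      rw [hfil, List.toFinset_card_of_nodup (hnodup.filter _), ← List.countP_eq_length_filter]
      exact hq
    have hEsdiff : (E \ N).card = p.length - (p.length + 1) / 2 := by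
      have h3 : (E ∩ N).card + (E \ N).card = E.card := Finset.card_inter_add_card_sdiff E N
      rw [Finset.inter_comm] at h3
      omega
    have hNsum : (N ∩ E).card + (N \ E).card = N.card := Finset.card_inter_add_card_sdiff N E
    have hdisj : Disjoint (N \ E) (E \ N) := by
      simp only [Finset.disjoint_left, Finset.mem_sdiff]
      rintro e ⟨-, he⟩ ⟨he2, -⟩
      exact he he2
    have hN'card : N'.card = N.card := by
      rw [hN'def, Finset.card_union_of_disjoint hdisj]
      obtain ⟨k, hk⟩ := heven
      omega
    -- the symmetric difference shrinks
    have hEsubD : E ⊆ (M \ N) ∪ (N \ M) := by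
      intro e he
      rcases hedge_inA_or_B e ((hmemE e).1 he) with h | h
      · exact Finset.mem_union_right _ (Finset.mem_sdiff.2 ⟨by simpa using h.1,
          by simpa using h.2⟩)
      · exact Finset.mem_union_left _ (Finset.mem_sdiff.2 ⟨by simpa using h.1,
          by simpa using h.2⟩)
    have hD' : (M \ N') ∪ (N' \ M) = ((M \ N) ∪ (N \ M)) \ E := by
      ext e
      simp only [Finset.mem_union, Finset.mem_sdiff, hmemN']
      by_cases heE : e ∈ E
      · by_cases heN : e ∈ N
        · have heM : e ∉ M := hEinA e heE heN
          simp [heE, heN, heM]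
        · have heM : e ∈ M := hEinB e heE heN
          simp [heE, heN, heM]
      · simp [heE]
    have hEpos : 0 < E.card := by omega
    have hDlt : ((M \ N') ∪ (N' \ M)).card < n := by
      rw [hD', Finset.card_sdiff_of_subset hEsubD]
      have hle := Finset.card_le_card hEsubD
      omega
    exact ih _ hDlt N' rfl hN'match (by omega)
  · -- odd case: p is an augmenting path
    have hlastA : p.edges.get ⟨p.length - 1, hllt⟩ ∈ A := by
      have := altL_get halt (p.length - 1) hllt
      rwa [if_neg (by rw [Nat.odd_iff] at hodd ⊢; omega)] at this
    have hwM : Unmatched (↑M : Set (Sym2 V)) w := by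
      intro e heM hwe
      by_cases hein : e ∈ p.edges
      · obtain ⟨hl, hrep, -⟩ := endpoint_edge hp hein hwe
        rw [hrep] at heM
        exact hlastA.2 heM
      · have heB : e ∈ B := by
          refine ⟨heM, fun heN2 => ?_⟩
          have := hN.2 w ⟨heN2, hwe⟩ ⟨by simpa using hlastA.1, (hlast hllt).2⟩
          exact hein (this ▸ (hlast hllt).1)
        set z := Sym2.Mem.other hwe with hzdef
        have hspec : s(w, z) = e := Sym2.other_spec hwe
        have hadj : G.Adj w z := by
          rw [← SimpleGraph.mem_edgeSet, hspec]
          exact hM.1 heM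
        have hzs : z ∉ p.support := by
          intro hzsup
          obtain ⟨i, hgi, hile⟩ := Walk.mem_support_iff_exists_getVert.1 hzsup
          have hzev : z ∈ e := hspec ▸ Sym2.mem_mk_right w z
          by_cases hi0 : i = 0
          · subst hi0
            rw [Walk.getVert_zero] at hgi
            exact hvM e heM (hgi ▸ hzev)
          · by_cases hil : i = p.length
            · subst hil
              rw [Walk.getVert_length] at hgi
              exact hadj.ne' hgi.symm
            · obtain ⟨f, hfe, hfB, hzf⟩ :=
                vertex_has_B_edge halt (by omega : 1 ≤ i) (by omega : i < p.length)
              have hfne : f ≠ e := fun h => hein (h ▸ hfe)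
              exact hfne (hM.2 (p.getVert i) ⟨by simpa using hfB.1, hzf⟩ ⟨heM, hgi ▸ hzev⟩)
        exact hmax z hadj hzs (by rw [if_pos hodd, hspec]; exact heB)
    refine ⟨v, w, p, hp, hodd, ?_, hvM, hwM⟩
    exact altL_isAlternating (fun e he => he.2) (fun e he => he.1) halt

end BergeAux


/-- Berge's lemma: a matching `M` in a finite graph `G` is maximum if and
only if there is no `M`-augmenting path in `G`. -/


theorem berge [Fintype V] (G : SimpleGraph V) (M : Finset (Sym2 V))
    (hM : IsMatchingSet G ↑M) :
    (∀ N : Finset (Sym2 V), IsMatchingSet G ↑N → N.card ≤ M.card) ↔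
      ¬ ∃ (u v : V) (p : G.Walk u v), IsAugPath G ↑M p := by
  classical
  constructor
  · intro hmax
    rintro ⟨u, w, p, haug⟩
    obtain ⟨N, hNm, hNc⟩ := matching_succ_of_aug G M hM haug
    have := hmax N hNm
    omega
  · intro hno N hN
    by_contra hlt
    push_neg at hlt
    exact hno (berge_key G M hM _ N rfl hN hlt)
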